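/- Under the stated two-lane assumptions, let T > 0 and let (ρ₁,ρ₂) : [0,T] → [0,R₁]×[0,R₂] be differentiable functions solving the lane-exchange ODE system ρ₁′(t) = −(1/τ)·S(ρ₁(t),ρ₂(t)) and ρ₂′(t) = (1/τ)·S(ρ₁(t),ρ₂(t)) for all t ∈ [0,T]. Then for every t ∈ [0,T] one has |S(ρ₁(t),ρ₂(t))| ≤ e^{−2ct/τ}·|S(ρ₁(0),ρ₂(0))|. (Exponential decay of the coupling source along the relaxation ODE, which is the two-lane instance of the linearized decay estimate (3.14) used in the proof of Theorem 3.4.) -/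

import Mathlib

open Set

/-- Exponential decay of the coupling source along the two-lane relaxation ODE
(two-lane instance of the linearized decay estimate (3.14) used in the proof of
Theorem 3.4). -/
theorem two_lane_ode_source_exponential_decay
    (R₁ R₂ c 𝒮 τ : ℝ)
    (hR₁ : 0 < R₁) (hR₂ : 0 < R₂) (hc : 0 < c) (hc𝒮 : c ≤ 𝒮) (hτ : 0 < τ)
    (S : ℝ → ℝ → ℝ)
    (hSC1 : ContDiff ℝ 1 (Function.uncurry S))
    (hS1 : ∀ u ∈ Icc (0:ℝ) R₁, ∀ w ∈ Icc (0:ℝ) R₂,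
      deriv (fun u' => S u' w) u ∈ Icc c 𝒮)
    (hS2 : ∀ u ∈ Icc (0:ℝ) R₁, ∀ w ∈ Icc (0:ℝ) R₂,
      deriv (fun w' => S u w') w ∈ Icc (-𝒮) (-c))
    (hS00 : S 0 0 = 0) (hSRR : S R₁ R₂ = 0)
    (Tmax : ℝ) (hT : 0 < Tmax)
    (ρ₁ ρ₂ : ℝ → ℝ)
    (hbox : ∀ t ∈ Icc (0:ℝ) Tmax, ρ₁ t ∈ Icc (0:ℝ) R₁ ∧ ρ₂ t ∈ Icc (0:ℝ) R₂)
    (hode₁ : ∀ t ∈ Icc (0:ℝ) Tmax,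
      HasDerivAt ρ₁ (-(1 / τ) * S (ρ₁ t) (ρ₂ t)) t)
    (hode₂ : ∀ t ∈ Icc (0:ℝ) Tmax,
      HasDerivAt ρ₂ ((1 / τ) * S (ρ₁ t) (ρ₂ t)) t) :
    ∀ t ∈ Icc (0:ℝ) Tmax,
      |S (ρ₁ t) (ρ₂ t)| ≤ Real.exp (-2 * c * t / τ) * |S (ρ₁ 0) (ρ₂ 0)| := by
  set g : ℝ → ℝ := fun t => S (ρ₁ t) (ρ₂ t) with hgdef
  -- derivative of g along the flow
  have key : ∀ t ∈ Icc (0:ℝ) Tmax, ∃ K : ℝ, 2 * c ≤ K ∧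
      HasDerivAt g (-(K / τ) * g t) t := by
    intro t ht
    obtain ⟨h1, h2⟩ := hbox t ht
    have hp : HasDerivAt (fun s => (ρ₁ s, ρ₂ s))
        (-(1 / τ) * S (ρ₁ t) (ρ₂ t), (1 / τ) * S (ρ₁ t) (ρ₂ t)) t :=
      (hode₁ t ht).prodMk (hode₂ t ht)
    have hfd : HasFDerivAt (Function.uncurry S)
        (fderiv ℝ (Function.uncurry S) (ρ₁ t, ρ₂ t)) (ρ₁ t, ρ₂ t) :=
      (hSC1.differentiable one_ne_zero (ρ₁ t, ρ₂ t)).hasFDerivAt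
    set L := fderiv ℝ (Function.uncurry S) (ρ₁ t, ρ₂ t) with hL
    have hA : HasDerivAt (fun u' => S u' (ρ₂ t)) (L ((1 : ℝ), (0 : ℝ))) (ρ₁ t) := by
      have hline : HasDerivAt (fun u' : ℝ => (u', ρ₂ t)) ((1 : ℝ), (0 : ℝ)) (ρ₁ t) :=
        (hasDerivAt_id _).prodMk (hasDerivAt_const _ _)
      exact hfd.comp_hasDerivAt (ρ₁ t) hline
    have hB : HasDerivAt (fun w' => S (ρ₁ t) w') (L ((0 : ℝ), (1 : ℝ))) (ρ₂ t) := by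
      have hline : HasDerivAt (fun w' : ℝ => (ρ₁ t, w')) ((0 : ℝ), (1 : ℝ)) (ρ₂ t) :=
        (hasDerivAt_const _ _).prodMk (hasDerivAt_id _)
      exact hfd.comp_hasDerivAt (ρ₂ t) hline
    have hAmem := hS1 _ h1 _ h2
    have hBmem := hS2 _ h1 _ h2
    rw [hA.deriv] at hAmem
    rw [hB.deriv] at hBmem
    refine ⟨L ((1 : ℝ), (0 : ℝ)) - L ((0 : ℝ), (1 : ℝ)),
      by linarith [hAmem.1, hBmem.2], ?_⟩
    have hcomp : HasDerivAt g
        (L (-(1 / τ) * S (ρ₁ t) (ρ₂ t), (1 / τ) * S (ρ₁ t) (ρ₂ t))) t :=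
      by have h := hfd.comp_hasDerivAt t hp; exact h
    convert hcomp using 1
    have hv : (-(1 / τ) * S (ρ₁ t) (ρ₂ t), (1 / τ) * S (ρ₁ t) (ρ₂ t))
        = (-(1 / τ) * S (ρ₁ t) (ρ₂ t)) • ((1 : ℝ), (0 : ℝ))
          + ((1 / τ) * S (ρ₁ t) (ρ₂ t)) • ((0 : ℝ), (1 : ℝ)) := by
      simp [Prod.ext_iff]
    rw [hv, map_add, map_smul, map_smul]
    simp only [smul_eq_mul, hgdef]
    ring
  -- the Lyapunov function
  set ψ : ℝ → ℝ := fun t => (Real.exp (2 * c * t / τ) * g t) ^ 2 with hψdef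
  have hψderiv : ∀ t ∈ Icc (0:ℝ) Tmax, ∃ D : ℝ, D ≤ 0 ∧ HasDerivAt ψ D t := by
    intro t ht
    obtain ⟨K, hK, hg'⟩ := key t ht
    have hE : HasDerivAt (fun s => Real.exp (2 * c * s / τ))
        (2 * c / τ * Real.exp (2 * c * t / τ)) t := by
      have h1 : HasDerivAt (fun s : ℝ => 2 * c * s / τ) (2 * c / τ) t := by
        simpa [mul_div_assoc] using
          (((hasDerivAt_id t).const_mul (2 * c)).div_const τ)
      simpa [mul_comm] using h1.exp
    have hprod := hE.mul hg'
    have hsq := hprod.pow 2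
    refine ⟨_, ?_, hsq⟩
    have hexp : (0:ℝ) < Real.exp (2 * c * t / τ) := Real.exp_pos _
    have hfac : 2 * c / τ - K / τ ≤ 0 := by
      rw [sub_nonpos, div_le_div_iff_of_pos_right hτ]
      exact hK
    have hrw : (2 : ℕ) * (Real.exp (2 * c * t / τ) * g t) ^ (2 - 1) *
        (2 * c / τ * Real.exp (2 * c * t / τ) * g t +
          Real.exp (2 * c * t / τ) * (-(K / τ) * g t))
        = 2 * (Real.exp (2 * c * t / τ)) ^ 2 * (g t) ^ 2 * (2 * c / τ - K / τ) := by
      ring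
    rw [show ((fun s => Real.exp (2 * c * s / τ)) * g) t = Real.exp (2 * c * t / τ) * g t from rfl, hrw]
    have : 0 ≤ 2 * (Real.exp (2 * c * t / τ)) ^ 2 * (g t) ^ 2 := by positivity
    exact mul_nonpos_of_nonneg_of_nonpos this hfac
  -- ψ is antitone on [0, Tmax]
  have hanti : AntitoneOn ψ (Icc (0:ℝ) Tmax) := by
    apply antitoneOn_of_deriv_nonpos (convex_Icc 0 Tmax)
    · intro t ht
      obtain ⟨D, _, hD⟩ := hψderiv t ht
      exact hD.continuousAt.continuousWithinAt
    · intro t ht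
      rw [interior_Icc] at ht
      obtain ⟨D, _, hD⟩ := hψderiv t (Ioo_subset_Icc_self ht)
      exact hD.differentiableAt.differentiableWithinAt
    · intro t ht
      rw [interior_Icc] at ht
      obtain ⟨D, hDle, hD⟩ := hψderiv t (Ioo_subset_Icc_self ht)
      rw [hD.deriv]
      exact hDle
  intro t ht
  have h0 : (0:ℝ) ∈ Icc (0:ℝ) Tmax := ⟨le_refl _, le_of_lt hT⟩
  have hle : ψ t ≤ ψ 0 := hanti h0 ht ht.1
  have hψ0 : ψ 0 = (g 0) ^ 2 := by simp [hψdef]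
  rw [hψ0] at hle
  have habs : |Real.exp (2 * c * t / τ) * g t| ≤ |g 0| := by
    have := Real.sqrt_le_sqrt hle
    rwa [Real.sqrt_sq_eq_abs, Real.sqrt_sq_eq_abs] at this
  have hexp : (0:ℝ) < Real.exp (2 * c * t / τ) := Real.exp_pos _
  rw [abs_mul, abs_of_pos hexp] at habs
  have hE : Real.exp (-2 * c * t / τ) = (Real.exp (2 * c * t / τ))⁻¹ := by
    rw [← Real.exp_neg]
    ring_nf
  rw [hE]
  rw [inv_mul_eq_div, le_div_iff₀ hexp]
  linarith [habs]
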